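/- Let A, A', B, B' be traceless symmetric n×n real matrices satisfying [[A', y], B] = [[B', y], A] for all symmetric y, and [B, A'] = [A, B']. Set T = AB' − BA'. Then T = 0, i.e. AB' = BA'. -/

import Mathlib

open Matrix

lemma entry_aux {n : ℕ} (X Y : Matrix (Fin n) (Fin n) ℝ) (k l i j : Fin n) :
    (X * Matrix.single k l (1:ℝ) * Y) i j = X i k * Y l j := by
  simp [mul_apply, Matrix.single, Finset.sum_ite_eq, Finset.mul_sum, Finset.sum_mul,
    ite_and, Finset.sum_ite_eq']

noncomputable def eM {n : ℕ} (i j : Fin n) : Matrix (Fin n) (Fin n) ℝ :=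
  Matrix.single i j (1:ℝ) + Matrix.single j i 1

lemma eM_symm {n : ℕ} (i j : Fin n) : (eM i j)ᵀ = eM i j := by
  ext a b
  simp only [transpose_apply, eM, Matrix.add_apply, Matrix.single, of_apply]
  rw [add_comm]
  congr 1 <;> simp [and_comm]

lemma key_aux {n : ℕ} (X Y : Matrix (Fin n) (Fin n) ℝ) :
    ∑ i, ∑ j, ((X * eM i j * Y : Matrix (Fin n) (Fin n) ℝ)) i j
      = X.trace * Y.trace + (X * Yᵀ).trace := by
  have h : ∀ i j : Fin n, (X * eM i j * Y) i j = X i i * Y j j + X i j * Y i j := by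
    intro i j
    have h2 : X * eM i j * Y
        = X * Matrix.single i j (1:ℝ) * Y + X * Matrix.single j i 1 * Y := by
      rw [eM]; noncomm_ring
    rw [h2, Matrix.add_apply, entry_aux, entry_aux]
  simp only [h, Finset.sum_add_distrib]
  congr 1
  · rw [Matrix.trace, Matrix.trace]
    simp only [Matrix.diag, Finset.sum_mul, Finset.mul_sum]
    exact Finset.sum_comm


/-- For traceless symmetric `A, A', B, B'` with `[[A', y], B] = [[B', y], A]` for all
symmetric `y` and `[B, A'] = [A, B']`, one has `T = AB' − BA' = 0`. -/
theorem stmt_13 {n : ℕ} (hn : 1 ≤ n)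
    (A A' B B' : Matrix (Fin n) (Fin n) ℝ)
    (hA : Aᵀ = A) (hA' : A'ᵀ = A') (hB : Bᵀ = B) (hB' : B'ᵀ = B')
    (htrA : A.trace = 0) (htrA' : A'.trace = 0)
    (htrB : B.trace = 0) (htrB' : B'.trace = 0)
    (h1 : ∀ y : Matrix (Fin n) (Fin n) ℝ, yᵀ = y → ⁅⁅A', y⁆, B⁆ = ⁅⁅B', y⁆, A⁆)
    (h2 : ⁅B, A'⁆ = ⁅A, B'⁆) :
    A * B' = B * A' := by
  simp only [Ring.lie_def] at h1 h2
  set T : Matrix (Fin n) (Fin n) ℝ := A * B' - B * A' with hTdef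
  have hT : B' * A - A' * B = T := by
    rw [hTdef]; linear_combination (norm := noncomm_ring) h2
  have star : ∀ y : Matrix (Fin n) (Fin n) ℝ, yᵀ = y →
      T * y + y * T = B' * y * A + A * y * B' - A' * y * B - B * y * A' := by
    intro y hy
    have h := h1 y hy
    have h3 : y * (B' * A - A' * B) = y * T := by rw [hT]
    rw [hTdef] at h3 ⊢
    linear_combination (norm := noncomm_ring) h - h3
  have hTsym : Tᵀ = T := by
    rw [hTdef, transpose_sub, transpose_mul, transpose_mul, hA, hA', hB, hB']
    exact hT
  have hu : ∀ i j : Fin n, T * eM i j + eM i j * T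
      = B' * eM i j * A + A * eM i j * B' - A' * eM i j * B - B * eM i j * A' :=
    fun i j => star (eM i j) (eM_symm i j)
  have S1 : ∑ i, ∑ j, ((T * eM i j * 1 + 1 * eM i j * T : Matrix (Fin n) (Fin n) ℝ)) i j
      = ∑ i, ∑ j, ((B' * eM i j * A + A * eM i j * B' - A' * eM i j * B - B * eM i j * A'
          : Matrix (Fin n) (Fin n) ℝ)) i j := by
    refine Finset.sum_congr rfl fun i _ => Finset.sum_congr rfl fun j _ => ?_
    rw [mul_one, one_mul, hu i j]
  simp only [Matrix.add_apply, Matrix.sub_apply, Finset.sum_add_distrib,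
    Finset.sum_sub_distrib, key_aux] at S1
  simp only [transpose_one, mul_one, one_mul, Matrix.trace_one, hTsym, hA, hA', hB, hB',
    htrA, htrA', htrB, htrB', Fintype.card_fin, mul_zero, zero_mul, add_zero, zero_add] at S1
  have c1 : (B' * A).trace = (A * B').trace := trace_mul_comm _ _
  have c2 : (A' * B).trace = (B * A').trace := trace_mul_comm _ _
  have htrT : T.trace = (A * B').trace - (B * A').trace := by rw [hTdef, trace_sub]
  have htT : T.trace = 0 := by
    have hn' : (n:ℝ) ≠ 0 := Nat.cast_ne_zero.mpr (by omega)
    have h0 : T.trace * (2 * n) = 0 := by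
      linear_combination S1 + c1 - c2 - 2 * htrT
    rcases mul_eq_zero.mp h0 with h | h
    · exact h
    · exact absurd h (by positivity)
  have hstep : ∀ i j : Fin n,
      (T*T) * eM i j * 1 + T * eM i j * T + (T * eM i j * T + 1 * eM i j * (T*T))
      = (T*B') * eM i j * A + (T*A) * eM i j * B' - (T*A') * eM i j * B - (T*B) * eM i j * A'
        + (B' * eM i j * (A*T) + A * eM i j * (B'*T) - A' * eM i j * (B*T) - B * eM i j * (A'*T)) := by
    intro i j
    calc (T*T) * eM i j * 1 + T * eM i j * T + (T * eM i j * T + 1 * eM i j * (T*T))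
        = T * (T * eM i j + eM i j * T) + (T * eM i j + eM i j * T) * T := by noncomm_ring
      _ = T * (B' * eM i j * A + A * eM i j * B' - A' * eM i j * B - B * eM i j * A')
          + (B' * eM i j * A + A * eM i j * B' - A' * eM i j * B - B * eM i j * A') * T := by
            rw [hu i j]
      _ = _ := by noncomm_ring
  have S2 : ∑ i, ∑ j, (((T*T) * eM i j * 1 + T * eM i j * T + (T * eM i j * T + 1 * eM i j * (T*T))
        : Matrix (Fin n) (Fin n) ℝ)) i j
      = ∑ i, ∑ j, (((T*B') * eM i j * A + (T*A) * eM i j * B' - (T*A') * eM i j * B - (T*B) * eM i j * A'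
        + (B' * eM i j * (A*T) + A * eM i j * (B'*T) - A' * eM i j * (B*T) - B * eM i j * (A'*T))
        : Matrix (Fin n) (Fin n) ℝ)) i j := by
    refine Finset.sum_congr rfl fun i _ => Finset.sum_congr rfl fun j _ => ?_
    rw [hstep i j]
  simp only [Matrix.add_apply, Matrix.sub_apply, Finset.sum_add_distrib,
    Finset.sum_sub_distrib, key_aux] at S2
  simp only [transpose_one, transpose_mul, mul_one, one_mul, Matrix.trace_one, trace_transpose,
    hTsym, hA, hA', hB, hB', htrA, htrA', htrB, htrB', htT, Fintype.card_fin,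
    mul_zero, zero_mul, add_zero, zero_add] at S2
  have g1 : (B' * (T * A)).trace = (T * A * B').trace := trace_mul_comm _ _
  have g2 : (A * (T * B')).trace = (T * B' * A).trace := trace_mul_comm _ _
  have g3 : (A' * (T * B)).trace = (T * B * A').trace := trace_mul_comm _ _
  have g4 : (B * (T * A')).trace = (T * A' * B).trace := trace_mul_comm _ _
  have k1 : (T * B' * A).trace - (T * A' * B).trace = (T * T).trace := by
    rw [mul_assoc, mul_assoc, ← trace_sub, ← mul_sub, hT]
  have k2 : (T * A * B').trace - (T * B * A').trace = (T * T).trace := by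
    rw [mul_assoc, mul_assoc, ← trace_sub, ← mul_sub, ← hTdef]
  have hs : (T * T).trace = 0 := by
    have hn' : (n:ℝ) ≠ 0 := Nat.cast_ne_zero.mpr (by omega)
    have h0 : (T * T).trace * (2 * n) = 0 := by
      linear_combination S2 + g1 + g2 - g3 - g4 + 2 * k1 + 2 * k2
    rcases mul_eq_zero.mp h0 with h | h
    · exact h
    · exact absurd h (by positivity)
  have hsq : (T * T).trace = ∑ i, ∑ j, (T i j)^2 := by
    nth_rewrite 1 [← hTsym]
    simp only [Matrix.trace, Matrix.diag, mul_apply, transpose_apply, sq]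
    exact Finset.sum_comm
  have hT0 : T = 0 := by
    have h00 : ∑ i : Fin n, ∑ j : Fin n, (T i j)^2 = 0 := by rw [← hsq, hs]
    ext i j
    have hrow := (Finset.sum_eq_zero_iff_of_nonneg
      (fun i _ => Finset.sum_nonneg fun j _ => sq_nonneg (T i j))).mp h00 i (Finset.mem_univ i)
    have hone := (Finset.sum_eq_zero_iff_of_nonneg
      (fun j _ => sq_nonneg (T i j))).mp hrow j (Finset.mem_univ j)
    simpa using (pow_eq_zero_iff two_ne_zero).mp hone
  have := hTdef ▸ hT0
  exact sub_eq_zero.mp this
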